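/- In the Mal'cev–Neumann division ring D = K((G)) as above, the element α = x₁⁻¹ + x₂⁻¹ + x₃⁻¹ + ⋯ (where xᵢ is the i-th standard generator of G) is transcendental over the center F = ℚ((H)): the powers 1, α, α², ..., αⁿ are F-linearly independent for every n. -/

import Mathlib

noncomputable section

/-- The subfield `K = ℚ(√p₀, √p₁, …)` of `ℝ` generated by the square roots of the
primes `p i`. -/
def sqrtField (p : ℕ → ℕ) : Subfield ℝ :=
  Subfield.closure (Set.range fun i => Real.sqrt (p i))

/-- The underlying additive group of Mal'cev–Neumann series `K((G))`, where
`G = ⊕_{i≥1} ℤ` is ordered lexicographically: Hahn series over `Lex (ℕ →₀ ℤ)` with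
coefficients in `K`. -/
abbrev MalcevNeumann (p : ℕ → ℕ) := HahnSeries (Lex (ℕ →₀ ℤ)) (sqrtField p)

/-- The twisted (crossed product) Mal'cev–Neumann multiplication
`(α · β)_g = ∑_{u + v = g} α_u · σ(u)(β_v)`, where `σ` is the action of `G` on `K`. -/
def tmul (p : ℕ → ℕ) (σ : (ℕ →₀ ℤ) → (sqrtField p →+* sqrtField p))
    (α β : MalcevNeumann p) : MalcevNeumann p where
  coeff g := ∑ ij ∈ Finset.addAntidiagonal α.isPWO_support β.isPWO_support g,
      α.coeff ij.1 * σ (ofLex ij.1) (β.coeff ij.2)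
  isPWO_support' := by
    apply (α.isPWO_support.add β.isPWO_support).mono
    intro g hg
    obtain ⟨ij, hij, -⟩ := Finset.exists_ne_zero_of_sum_ne_zero hg
    replace hij := Finset.mem_addAntidiagonal.1 hij
    exact hij.2.2 ▸ Set.add_mem_add hij.1 hij.2.1

/-- Powers with respect to the twisted multiplication, `α⁰ = 1`. -/
def tpow (p : ℕ → ℕ) (σ : (ℕ →₀ ℤ) → (sqrtField p →+* sqrtField p))
    (α : MalcevNeumann p) : ℕ → MalcevNeumann p
  | 0 => HahnSeries.single (0 : Lex (ℕ →₀ ℤ)) (1 : sqrtField p)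
  | n + 1 => tmul p σ (tpow p σ α n) α

theorem key_lemma (i n : ℕ) (h0e he v : ℕ →₀ ℤ) (hv0 : ∀ j, v j ≤ 0)
    (hvs : v.sum (fun _ x => x) = -(i : ℤ))
    (heq : ∀ j, (he j + he j) + v j = (h0e j + h0e j) + (if j < n then (-1:ℤ) else 0)) :
    n ≤ i ∧ (i ≤ n → (∀ j, v j = if j < n then (-1:ℤ) else 0) ∧ he = h0e) := by
  classical
  have step1 : ∀ j < n, v j ≤ -1 := by
    intro j hj
    have := heq j
    simp only [if_pos hj] at this
    have := hv0 j
    omega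
  set T : Finset ℕ := v.support ∪ Finset.range n with hT
  have hsubT : v.support ⊆ T := Finset.subset_union_left
  have hsubR : Finset.range n ⊆ T := Finset.subset_union_right
  have htot : ∑ j ∈ T, v j = -(i : ℤ) := by
    rw [← hvs, Finsupp.sum]
    exact (Finset.sum_subset hsubT (fun j _ hj => Finsupp.notMem_support_iff.mp hj)).symm
  have hsplit : ∑ j ∈ T \ Finset.range n, v j + ∑ j ∈ Finset.range n, v j = ∑ j ∈ T, v j :=
    Finset.sum_sdiff hsubR
  have hrange_le : ∑ j ∈ Finset.range n, v j ≤ -(n : ℤ) := by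
    calc ∑ j ∈ Finset.range n, v j ≤ ∑ _j ∈ Finset.range n, (-1 : ℤ) :=
          Finset.sum_le_sum (fun j hj => step1 j (Finset.mem_range.mp hj))
      _ = -(n : ℤ) := by simp
  have hsd_nonpos : ∑ j ∈ T \ Finset.range n, v j ≤ 0 :=
    Finset.sum_nonpos (fun j _ => hv0 j)
  have hni : n ≤ i := by omega
  refine ⟨hni, fun hin => ?_⟩
  have hieqn : i = n := le_antisymm hin hni
  subst hieqn
  have hrange_eq : ∑ j ∈ Finset.range i, v j = -(i : ℤ) := by omega
  have hsd_eq : ∑ j ∈ T \ Finset.range i, v j = 0 := by omega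
  have hout : ∀ j ∈ T \ Finset.range i, v j = 0 :=
    (Finset.sum_eq_zero_iff_of_nonpos (fun j _ => hv0 j)).mp hsd_eq
  have hin1 : ∀ j ∈ Finset.range i, v j = -1 := by
    have h2 : ∑ j ∈ Finset.range i, (v j + 1) = 0 := by
      rw [Finset.sum_add_distrib, hrange_eq]; simp
    have h3 := (Finset.sum_eq_zero_iff_of_nonpos
      (fun j hj => by have := step1 j (Finset.mem_range.mp hj); omega)).mp h2
    intro j hj; have := h3 j hj; omega
  have hv : ∀ j, v j = if j < i then (-1:ℤ) else 0 := by
    intro j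
    by_cases hj : j < i
    · rw [if_pos hj]; exact hin1 j (Finset.mem_range.mpr hj)
    · rw [if_neg hj]
      by_cases hs : j ∈ v.support
      · exact hout j (Finset.mem_sdiff.mpr ⟨hsubT hs, by simpa using hj⟩)
      · exact Finsupp.notMem_support_iff.mp hs
  refine ⟨hv, ?_⟩
  ext j
  have h1 := heq j
  have h2 := hv j
  by_cases hj : j < i <;> simp only [if_pos, if_neg, hj] at h1 h2 <;> omega


namespace Stmt18Aux

variable (p : ℕ → ℕ) (σ : (ℕ →₀ ℤ) → (sqrtField p →+* sqrtField p))

theorem tmul_coeff (a b : MalcevNeumann p) (g : Lex (ℕ →₀ ℤ)) :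
    (tmul p σ a b).coeff g = ∑ ij ∈ Finset.addAntidiagonal a.isPWO_support b.isPWO_support g,
      a.coeff ij.1 * σ (ofLex ij.1) (b.coeff ij.2) := rfl

theorem tmul_zero_left (b : MalcevNeumann p) : tmul p σ 0 b = 0 := by
  apply HahnSeries.ext
  funext g
  rw [tmul_coeff, HahnSeries.coeff_zero]
  exact Finset.sum_eq_zero (fun ij _ => by rw [HahnSeries.coeff_zero, zero_mul])

theorem coeff_sum {ι} (s : Finset ι) (f : ι → MalcevNeumann p) (g : Lex (ℕ →₀ ℤ)) :
    (∑ i ∈ s, f i).coeff g = ∑ i ∈ s, (f i).coeff g := by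
  classical
  induction s using Finset.cons_induction with
  | empty => simp
  | cons a s ha ih => rw [Finset.sum_cons, Finset.sum_cons, HahnSeries.coeff_add, ih]

variable (α : MalcevNeumann p)
    (hα1 : ∀ i : ℕ, α.coeff (toLex (Finsupp.single i (-1 : ℤ))) = 1)
    (hα2 : ∀ g : Lex (ℕ →₀ ℤ),
      (∀ i : ℕ, g ≠ toLex (Finsupp.single i (-1 : ℤ))) → α.coeff g = 0)

include hα1 hα2

theorem alpha01 (v : Lex (ℕ →₀ ℤ)) : α.coeff v = 0 ∨ α.coeff v = 1 := by
  by_cases h : ∃ i, v = toLex (Finsupp.single i (-1:ℤ))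
  · obtain ⟨i, rfl⟩ := h; exact Or.inr (hα1 i)
  · push_neg at h; exact Or.inl (hα2 v h)

theorem tpow_nat (i : ℕ) (g : Lex (ℕ →₀ ℤ)) :
    ∃ m : ℕ, (tpow p σ α i).coeff g = (m : sqrtField p) := by
  suffices h : (tpow p σ α i).coeff g ∈ (Nat.castRingHom (sqrtField p)).rangeS by
    obtain ⟨m, hm⟩ := RingHom.mem_rangeS.mp h
    exact ⟨m, hm.symm⟩
  induction i generalizing g with
  | zero =>
    show (HahnSeries.single (0 : Lex (ℕ →₀ ℤ)) (1 : sqrtField p)).coeff g ∈ _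
    rw [HahnSeries.coeff_single]
    split
    · exact ⟨1, by simp⟩
    · exact ⟨0, by simp⟩
  | succ k ih =>
    rw [show tpow p σ α (k+1) = tmul p σ (tpow p σ α k) α from rfl, tmul_coeff]
    apply Subsemiring.sum_mem
    intro ij _
    apply Subsemiring.mul_mem _ (ih _)
    rcases alpha01 p α hα1 hα2 ij.2 with h | h <;> rw [h]
    · rw [map_zero]; exact ⟨0, by simp⟩
    · rw [map_one]; exact ⟨1, by simp⟩

theorem tpow_nonneg (i : ℕ) (g : Lex (ℕ →₀ ℤ)) : 0 ≤ (tpow p σ α i).coeff g := by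
  obtain ⟨m, hm⟩ := tpow_nat p σ α hα1 hα2 i g
  rw [hm]; positivity

theorem tpow_supp (i : ℕ) (g : Lex (ℕ →₀ ℤ)) (h : (tpow p σ α i).coeff g ≠ 0) :
    (∀ j, ofLex g j ≤ 0) ∧ (ofLex g).sum (fun _ x => x) = -(i : ℤ) := by
  induction i generalizing g with
  | zero =>
    have hg : g = 0 := by
      by_contra hg
      exact h (HahnSeries.coeff_single_of_ne hg)
    subst hg
    constructor
    · intro j; simp
    · simp
  | succ k ih =>
    rw [show tpow p σ α (k+1) = tmul p σ (tpow p σ α k) α from rfl, tmul_coeff] at h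
    obtain ⟨ij, hij, hne⟩ := Finset.exists_ne_zero_of_sum_ne_zero h
    replace hij := Finset.mem_addAntidiagonal.1 hij
    have h1 : (tpow p σ α k).coeff ij.1 ≠ 0 := fun h0 => hne (by rw [h0, zero_mul])
    have h2 : α.coeff ij.2 ≠ 0 := fun h0 => hne (by rw [h0, map_zero, mul_zero])
    obtain ⟨j, hj⟩ : ∃ j, ij.2 = toLex (Finsupp.single j (-1:ℤ)) := by
      by_contra hno; push_neg at hno; exact h2 (hα2 _ hno)
    obtain ⟨hle, hsum⟩ := ih _ h1
    have hg : g = ij.1 + ij.2 := hij.2.2.symm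
    subst hg
    have hof : ofLex (ij.1 + ij.2) = ofLex ij.1 + Finsupp.single j (-1:ℤ) := by
      rw [hj]; rfl
    constructor
    · intro j'
      rw [hof, Finsupp.add_apply, Finsupp.single_apply]
      have := hle j'
      split <;> omega
    · rw [hof, Finsupp.sum_add_index' (fun _ => rfl) (fun _ _ _ => rfl), hsum,
        Finsupp.sum_single_index rfl]
      push_cast; ring

theorem tpow_pos (s : Finset ℕ) :
    0 < (tpow p σ α s.card).coeff (toLex (∑ j ∈ s, Finsupp.single j (-1 : ℤ))) := by
  classical
  induction s using Finset.cons_induction with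
  | empty =>
    rw [Finset.card_empty, Finset.sum_empty]
    show (0:sqrtField p) < (HahnSeries.single (0 : Lex (ℕ →₀ ℤ)) (1 : sqrtField p)).coeff _
    rw [show toLex (0 : ℕ →₀ ℤ) = (0 : Lex (ℕ →₀ ℤ)) from rfl, HahnSeries.coeff_single_same]
    exact zero_lt_one
  | cons a s ha ih =>
    rw [Finset.card_cons, Finset.sum_cons,
      show tpow p σ α (s.card + 1) = tmul p σ (tpow p σ α s.card) α from rfl, tmul_coeff]
    apply Finset.sum_pos'
    · intro ij _
      have h1 := tpow_nonneg p σ α hα1 hα2 s.card ij.1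
      rcases alpha01 p α hα1 hα2 ij.2 with h | h <;> rw [h]
      · rw [map_zero, mul_zero]
      · rw [map_one, mul_one]; exact h1
    · refine ⟨(toLex (∑ j ∈ s, Finsupp.single j (-1:ℤ)), toLex (Finsupp.single a (-1:ℤ))),
        ?_, ?_⟩
      · refine Finset.mem_addAntidiagonal.2 ?_
        refine ⟨ih.ne', ?_, ?_⟩
        · rw [HahnSeries.mem_support, hα1 a]; exact one_ne_zero
        · show toLex (∑ j ∈ s, Finsupp.single j (-1:ℤ)) + toLex (Finsupp.single a (-1:ℤ)) =
            toLex (Finsupp.single a (-1:ℤ) + ∑ j ∈ s, Finsupp.single j (-1:ℤ))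
          rw [add_comm]; rfl
      · simp only [hα1 a, map_one, mul_one]
        exact ih



theorem top_zero
    (hσQ : ∀ (g : ℕ →₀ ℤ) (q : ℚ), σ g (q : sqrtField p) = (q : sqrtField p))
    (n : ℕ) (c : ℕ → MalcevNeumann p)
    (hc : ∀ i, ∀ g ∈ (c i).support,
      (∃ h : ℕ →₀ ℤ, ofLex g = h + h) ∧ ∃ q : ℚ, (c i).coeff g = (q : sqrtField p))
    (hsum : ∑ i ∈ Finset.range (n + 1), tmul p σ (c i) (tpow p σ α i) = 0) :
    c n = 0 := by
  classical
  apply HahnSeries.ext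
  funext h0
  rw [HahnSeries.coeff_zero]
  by_cases hsupp : h0 ∈ (c n).support
  swap
  · rw [HahnSeries.mem_support, not_not] at hsupp
    exact hsupp
  obtain ⟨⟨e0, he0⟩, -⟩ := hc n h0 hsupp
  set E : ℕ →₀ ℤ := ∑ j ∈ Finset.range n, Finsupp.single j (-1:ℤ) with hE
  have hEapp : ∀ j, E j = if j < n then (-1:ℤ) else 0 := by
    intro j
    rw [hE, Finset.sum_apply']
    rw [Finset.sum_congr rfl (fun j' _ => Finsupp.single_apply), Finset.sum_ite_eq']
    simp
  set u : Lex (ℕ →₀ ℤ) := toLex (ofLex h0 + E) with hu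
  have H := congrArg (fun x : MalcevNeumann p => x.coeff u) hsum
  simp only [HahnSeries.coeff_zero] at H
  rw [coeff_sum, Finset.sum_range_succ] at H
  -- the parity engine
  have engine : ∀ (i : ℕ) (ij : Lex (ℕ →₀ ℤ) × Lex (ℕ →₀ ℤ)),
      ij.1 ∈ (c i).support → ij.2 ∈ (tpow p σ α i).support → ij.1 + ij.2 = u →
      n ≤ i ∧ (i ≤ n → ij.2 = toLex E ∧ ij.1 = h0) := by
    intro i ij h1 h2 h3
    obtain ⟨⟨eh, heh⟩, -⟩ := hc i ij.1 h1
    obtain ⟨hv0, hvs⟩ := tpow_supp p σ α hα1 hα2 i ij.2 (HahnSeries.mem_support _ _ |>.mp h2)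
    have heq : ∀ j, (eh j + eh j) + ofLex ij.2 j
        = (e0 j + e0 j) + (if j < n then (-1:ℤ) else 0) := by
      intro j
      have hA : ofLex ij.1 j + ofLex ij.2 j = ofLex h0 j + E j :=
        congrArg (fun x : Lex (ℕ →₀ ℤ) => ofLex x j) h3
      have hB : ofLex ij.1 j = eh j + eh j := by rw [heh]; exact Finsupp.add_apply _ _ _
      have hC : ofLex h0 j = e0 j + e0 j := by rw [he0]; exact Finsupp.add_apply _ _ _
      rw [hEapp j] at hA
      omega
    obtain ⟨hle, himp⟩ := key_lemma i n e0 eh (ofLex ij.2) hv0 hvs heq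
    refine ⟨hle, fun hin => ?_⟩
    obtain ⟨hveq, hehe⟩ := himp hin
    have h2' : ij.2 = toLex E := by
      apply (ofLex : Lex (ℕ →₀ ℤ) ≃ (ℕ →₀ ℤ)).injective
      ext j
      rw [hveq j, ← hEapp j]
      rfl
    refine ⟨h2', ?_⟩
    apply (ofLex : Lex (ℕ →₀ ℤ) ≃ (ℕ →₀ ℤ)).injective
    rw [heh, he0, hehe]
  have hzero : ∀ i ∈ Finset.range n, (tmul p σ (c i) (tpow p σ α i)).coeff u = 0 := by
    intro i hi
    rw [tmul_coeff]
    apply Finset.sum_eq_zero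
    intro ij hij
    replace hij := Finset.mem_addAntidiagonal.1 hij
    have := (engine i ij hij.1 hij.2.1 hij.2.2).1
    rw [Finset.mem_range] at hi
    omega
  rw [Finset.sum_eq_zero hzero, zero_add, tmul_coeff] at H
  have hpos : 0 < (tpow p σ α n).coeff (toLex E) := by
    have := tpow_pos p σ α hα1 hα2 (Finset.range n)
    rwa [Finset.card_range, ← hE] at this
  have hsum_u : h0 + toLex E = u := rfl
  have hkey : ∑ ij ∈ Finset.addAntidiagonal (c n).isPWO_support
        (tpow p σ α n).isPWO_support u,
      (c n).coeff ij.1 * σ (ofLex ij.1) ((tpow p σ α n).coeff ij.2)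
      = (c n).coeff h0 * σ (ofLex h0) ((tpow p σ α n).coeff (toLex E)) := by
    apply Finset.sum_eq_single (h0, toLex E)
    · intro b hb hne
      replace hb := Finset.mem_addAntidiagonal.1 hb
      obtain ⟨-, himp⟩ := engine n b hb.1 hb.2.1 hb.2.2
      obtain ⟨hb2, hb1⟩ := himp le_rfl
      exact absurd (Prod.ext hb1 hb2) hne
    · intro hnot
      exfalso
      apply hnot
      refine Finset.mem_addAntidiagonal.2 ?_
      exact ⟨hsupp, HahnSeries.mem_support _ _ |>.mpr hpos.ne', hsum_u⟩
  rw [hkey] at H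
  obtain ⟨m, hm⟩ := tpow_nat p σ α hα1 hα2 n (toLex E)
  rw [hm] at H hpos
  have hfix : σ (ofLex h0) ((m : ℕ) : sqrtField p) = ((m : ℕ) : sqrtField p) := by
    rw [show ((m : ℕ) : sqrtField p) = ((m : ℚ) : sqrtField p) by push_cast; ring]
    exact hσQ (ofLex h0) (m : ℚ)
  rw [hfix] at H
  exact (mul_eq_zero.mp H).resolve_right hpos.ne'



end Stmt18Aux

/-- In the Mal'cev–Neumann division ring `D = K((G))`, the element
`α = x₁⁻¹ + x₂⁻¹ + ⋯` (where `xᵢ` is the `i`-th standard generator of `G`) is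
transcendental over the center `F = ℚ((H))`: the powers `1, α, α², …, αⁿ` are
`F`-linearly independent for every `n`. -/
theorem stmt_18 (p : ℕ → ℕ) (hp : ∀ i, (p i).Prime) (hmono : StrictMono p)
    (σ : (ℕ →₀ ℤ) → (sqrtField p →+* sqrtField p))
    (hσ0 : σ 0 = RingHom.id _)
    (hσadd : ∀ g h, σ (g + h) = (σ g).comp (σ h))
    (hσQ : ∀ (g : ℕ →₀ ℤ) (q : ℚ), σ g (q : sqrtField p) = (q : sqrtField p))
    (hσsqrt : ∀ (g : ℕ →₀ ℤ) (i : ℕ) (y : sqrtField p), (y : ℝ) = Real.sqrt (p i) →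
      ((σ g y : sqrtField p) : ℝ) = (-1 : ℝ) ^ (g i) * Real.sqrt (p i))
    (α : MalcevNeumann p)
    (hα1 : ∀ i : ℕ, α.coeff (toLex (Finsupp.single i (-1 : ℤ))) = 1)
    (hα2 : ∀ g : Lex (ℕ →₀ ℤ),
      (∀ i : ℕ, g ≠ toLex (Finsupp.single i (-1 : ℤ))) → α.coeff g = 0)
    (n : ℕ) (c : ℕ → MalcevNeumann p)
    (hc : ∀ i, ∀ g ∈ (c i).support,
      (∃ h : ℕ →₀ ℤ, ofLex g = h + h) ∧ ∃ q : ℚ, (c i).coeff g = (q : sqrtField p))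
    (hsum : ∑ i ∈ Finset.range (n + 1), tmul p σ (c i) (tpow p σ α i) = 0) :
    ∀ i ≤ n, c i = 0 := by
  induction n with
  | zero =>
    intro i hi
    interval_cases i
    exact Stmt18Aux.top_zero p σ α hα1 hα2 hσQ 0 c hc hsum
  | succ m ih =>
    have htop : c (m + 1) = 0 := Stmt18Aux.top_zero p σ α hα1 hα2 hσQ (m + 1) c hc hsum
    have hsum' : ∑ i ∈ Finset.range (m + 1), tmul p σ (c i) (tpow p σ α i) = 0 := by
      rw [Finset.sum_range_succ, htop, Stmt18Aux.tmul_zero_left, add_zero] at hsum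
      exact hsum
    intro i hi
    rcases Nat.lt_succ_iff_lt_or_eq.mp (Nat.lt_succ_of_le hi) with h | h
    · exact ih hsum' i (Nat.lt_succ_iff.mp h)
    · rw [h]; exact htop

end
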